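/- Let k and ℓ be odd positive integers with ℓ > k, and let n ≥ 2 be an integer. If n < p³ for every prime p dividing n, then a_{k,ℓ}(n) < 0. -/

import Mathlib

/-- `σ_s(n) = ∑_{d ∣ n} d^s`, as an integer. -/
def sigmaZ (s n : ℕ) : ℤ := ∑ d ∈ n.divisors, (d : ℤ) ^ s

/-- `a_{k,ℓ}(n) = (n^{3ℓ}+n^{2ℓ}+n^ℓ+1)·σ_{3k}(n) − (n^{3k}+n^{2k}+n^k+1)·σ_{3ℓ}(n)`. -/
def aFun (k l n : ℕ) : ℤ :=
  ((n : ℤ) ^ (3 * l) + (n : ℤ) ^ (2 * l) + (n : ℤ) ^ l + 1) * sigmaZ (3 * k) n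
    - ((n : ℤ) ^ (3 * k) + (n : ℤ) ^ (2 * k) + (n : ℤ) ^ k + 1) * sigmaZ (3 * l) n

namespace AFunNeg

/-! ### Elementary power inequalities -/

lemma pow_sum_le3 (x y z k : ℕ) (hk : 1 ≤ k) : x^k + y^k + z^k ≤ (x+y+z)^k := by
  obtain ⟨m, rfl⟩ := Nat.exists_eq_add_of_le hk
  have hx : x^(1+m) ≤ x*(x+y+z)^m := by
    rw [pow_add, pow_one]; exact Nat.mul_le_mul_left x (Nat.pow_le_pow_left (by omega) m)
  have hy : y^(1+m) ≤ y*(x+y+z)^m := by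
    rw [pow_add, pow_one]; exact Nat.mul_le_mul_left y (Nat.pow_le_pow_left (by omega) m)
  have hz : z^(1+m) ≤ z*(x+y+z)^m := by
    rw [pow_add, pow_one]; exact Nat.mul_le_mul_left z (Nat.pow_le_pow_left (by omega) m)
  calc x^(1+m) + y^(1+m) + z^(1+m) ≤ (x+y+z)*(x+y+z)^m := by linarith
    _ = (x+y+z)^(1+m) := by rw [pow_add, pow_one]

lemma pow_sum_le2 (x y k : ℕ) (hk : 1 ≤ k) : x^k + y^k ≤ (x+y)^k := by
  have := pow_sum_le3 x y 0 k hk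
  rwa [zero_pow (by omega), add_zero, add_zero] at this

/-- key inequality: p³+q³+1 ≤ p²q² for 2 ≤ p < q < p² -/
lemma cube_ineq (p q : ℕ) (hp : 2 ≤ p) (hpq : p < q) (hq : q < p^2) :
    p^3 + q^3 + 1 ≤ p^2*q^2 := by
  rcases le_or_gt (q + p) (p^2) with h | h
  · have h1 : (q + p) * q^2 ≤ p^2 * q^2 := Nat.mul_le_mul_right _ h
    have h2 : p^3 + 1 ≤ p * q^2 := by
      nlinarith [Nat.mul_le_mul_left p (Nat.pow_le_pow_left (show p+1 ≤ q by omega) 2)]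
    nlinarith
  · have h3 : (p^2+1)*(p^2+1) ≤ (q+p)*(q+p) := Nat.mul_le_mul h h
    have h4 : 2*p*q + 2*p ≤ 2*p*p^2 := by
      nlinarith [Nat.mul_le_mul_left (2*p) (show q+1 ≤ p^2 from hq)]
    have hC : 3*(p^2*p) ≤ p^2*p^2 + p^2 + 2*p := by nlinarith
    have h1 : p^3 + 1 ≤ q^2 := by nlinarith
    have h2 : (q+1) * q^2 ≤ p^2 * q^2 := Nat.mul_le_mul_right _ hq
    nlinarith

/-! ### Case A : `n` prime -/

lemma quadA (u v : ℕ) (hu : 2 ≤ u) (huv : 2*u ≤ v) :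
    (v^3+v^2+v+1)*(1+u^3) < (u^3+u^2+u+1)*(1+v^3) := by
  have hv2 : 4*u^2 ≤ v^2 := by
    calc 4*u^2 = (2*u)*(2*u) := by ring
      _ ≤ v*v := Nat.mul_le_mul huv huv
      _ = v^2 := by ring
  have f1 : 2*(u^3*v^2) ≤ u^2*v^3 := by
    calc 2*(u^3*v^2) = (2*u)*(u^2*v^2) := by ring
      _ ≤ v*(u^2*v^2) := Nat.mul_le_mul_right _ huv
      _ = u^2*v^3 := by ring
  have f2 : v^2 ≤ u^3*v^2 := Nat.le_mul_of_pos_left _ (by positivity)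
  have h1 : u^3*v^2 + v^2 ≤ u^2*v^3 := by linarith
  have f3 : 4*(u^3*v) ≤ u*v^3 := by
    calc 4*(u^3*v) = (4*u^2)*(u*v) := by ring
      _ ≤ v^2*(u*v) := Nat.mul_le_mul_right _ hv2
      _ = u*v^3 := by ring
  have f4 : v ≤ u^3*v := Nat.le_mul_of_pos_left v (by positivity)
  have h2 : u^3*v + v ≤ u*v^3 := by linarith
  nlinarith [h1, h2, hu]

lemma caseA_ineq (x k l : ℕ) (hx : 2 ≤ x) (hk : 1 ≤ k) (hkl : k < l) :
    (x^(3*l)+x^(2*l)+x^l+1)*(1+x^(3*k)) < (x^(3*k)+x^(2*k)+x^k+1)*(1+x^(3*l)) := by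
  rw [show x^(3*l) = (x^l)^3 by ring, show x^(2*l) = (x^l)^2 by ring,
      show x^(3*k) = (x^k)^3 by ring, show x^(2*k) = (x^k)^2 by ring]
  apply quadA
  · calc 2 ≤ x := hx
      _ = x^1 := (pow_one x).symm
      _ ≤ x^k := Nat.pow_le_pow_right (by omega) hk
  · calc 2*x^k ≤ x*x^k := Nat.mul_le_mul_right _ hx
      _ = x^(k+1) := by ring
      _ ≤ x^l := Nat.pow_le_pow_right (by omega) (by omega)

/-! ### Case B : `n = p²` -/

lemma quadB (u v : ℕ) (hu : 2 ≤ u) (huv : 2*u ≤ v) :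
    (v^6+v^4+v^2+1)*(1+u^3+u^6) < (u^6+u^4+u^2+1)*(1+v^3+v^6) := by
  have hv2 : 4*u^2 ≤ v^2 := by
    calc 4*u^2 = (2*u)*(2*u) := by ring
      _ ≤ v*v := Nat.mul_le_mul huv huv
      _ = v^2 := by ring
  have c1 : 4*u^6 ≤ v^2*u^4 := by
    calc 4*u^6 = (4*u^2)*u^4 := by ring
      _ ≤ v^2*u^4 := Nat.mul_le_mul_right _ hv2
  have c3 : 2*(v^2*u^3) ≤ v^2*u^4 := by
    calc 2*(v^2*u^3) ≤ u*(v^2*u^3) := Nat.mul_le_mul_right _ hu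
      _ = v^2*u^4 := by ring
  have core1 : v^2*u^3 + u^6 ≤ v^2*u^4 := by linarith [Nat.zero_le (v^2*u^4)]
  have HB1 : v^6*u^3 + v^4*u^6 ≤ v^6*u^4 := by
    calc v^6*u^3 + v^4*u^6 = (v^2*u^3 + u^6)*v^4 := by ring
      _ ≤ (v^2*u^4)*v^4 := Nat.mul_le_mul_right _ core1
      _ = v^6*u^4 := by ring
  have c4 : 4*(v^2*u^4) ≤ v^4*u^2 := by
    calc 4*(v^2*u^4) = (4*u^2)*(v^2*u^2) := by ring
      _ ≤ v^2*(v^2*u^2) := Nat.mul_le_mul_right _ hv2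
      _ = v^4*u^2 := by ring
  have c5 : v^2*u^3 ≤ v^2*u^4 := Nat.mul_le_mul_left _ (Nat.pow_le_pow_right (by omega) (by omega))
  have c6 : v^2 ≤ v^2*u^4 := Nat.le_mul_of_pos_right _ (by positivity)
  have c7 : u^6 ≤ v^2*u^4 := by
    calc u^6 = u^2*u^4 := by ring
      _ ≤ v^2*u^4 := Nat.mul_le_mul_right _ (by nlinarith)
  have core2 : v^2*u^3 + v^2 + u^6 ≤ v^4*u^2 := by
    linarith [Nat.zero_le (v^2*u^4), Nat.zero_le (v^4*u^2)]
  have HB2 : v^4*u^3 + v^4 + v^2*u^6 ≤ v^6*u^2 := by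
    calc v^4*u^3 + v^4 + v^2*u^6 = (v^2*u^3 + v^2 + u^6)*v^2 := by ring
      _ ≤ (v^4*u^2)*v^2 := Nat.mul_le_mul_right _ core2
      _ = v^6*u^2 := by ring
  have f1 : 2*(u^3*v^2) ≤ u^2*v^3 := by
    calc 2*(u^3*v^2) = (2*u)*(u^2*v^2) := by ring
      _ ≤ v*(u^2*v^2) := Nat.mul_le_mul_right _ huv
      _ = u^2*v^3 := by ring
  have f2 : v^2 ≤ u^3*v^2 := Nat.le_mul_of_pos_left _ (by positivity)
  have HB3 : v^2*u^3 + v^2 ≤ v^3*u^2 := by linarith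
  have HB4 : u^3 < v^3 := Nat.pow_lt_pow_left (by omega) (by omega)
  nlinarith [HB1, HB2, HB3, HB4, hu, Nat.zero_le (u^4*v^3), Nat.zero_le (u^2*v^3),
    Nat.zero_le (u^6*v^3), Nat.zero_le (u^4), Nat.zero_le (u^2)]

lemma caseB_ineq (x k l : ℕ) (hx : 2 ≤ x) (hk : 1 ≤ k) (hkl : k < l) :
    ((x^2)^(3*l)+(x^2)^(2*l)+(x^2)^l+1)*(1+x^(3*k)+(x^2)^(3*k))
      < ((x^2)^(3*k)+(x^2)^(2*k)+(x^2)^k+1)*(1+x^(3*l)+(x^2)^(3*l)) := by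
  rw [show (x^2)^(3*l) = (x^l)^6 by ring, show (x^2)^(2*l) = (x^l)^4 by ring,
      show (x^2)^l = (x^l)^2 by ring, show x^(3*k) = (x^k)^3 by ring,
      show (x^2)^(3*k) = (x^k)^6 by ring, show (x^2)^(2*k) = (x^k)^4 by ring,
      show (x^2)^k = (x^k)^2 by ring, show x^(3*l) = (x^l)^3 by ring]
  apply quadB
  · calc 2 ≤ x := hx
      _ = x^1 := (pow_one x).symm
      _ ≤ x^k := Nat.pow_le_pow_right (by omega) hk
  · calc 2*x^k ≤ x*x^k := Nat.mul_le_mul_right _ hx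
      _ = x^(k+1) := by ring
      _ ≤ x^l := Nat.pow_le_pow_right (by omega) (by omega)

/-! ### Case C : `n = p*q` -/

lemma quadC (a b c d : ℕ)
    (H1 : (b*d)^3*(a^3+c^3) + (b*d)^2*(a*c)^3 ≤ (b*d)^3*(a*c)^2)
    (H2 : (b*d)^2*(a^3+c^3+1) ≤ (a*c)*(b*d)^3)
    (H3 : (b*d)*(a*c)^3 ≤ (a*c)^3*d^3)
    (H4 : (b*d)*(a^3+c^3+1) ≤ (a*c)^3*b^3)
    (H5 : a^3+c^3 < b^3+d^3) :
    ((b*d)^3+(b*d)^2+(b*d)+1)*(1+a^3+c^3+(a*c)^3)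
      < ((a*c)^3+(a*c)^2+(a*c)+1)*(1+b^3+d^3+(b*d)^3) := by
  nlinarith [H1, H2, H3, H4, H5, Nat.zero_le (a^2*c^2*b^3), Nat.zero_le (a^2*c^2*d^3),
    Nat.zero_le (a^2*c^2), Nat.zero_le (a*c*b^3), Nat.zero_le (a*c*d^3), Nat.zero_le (a*c)]

lemma caseC_ineq (p q k l : ℕ) (hp : 2 ≤ p) (hpq : p < q) (hq : q < p^2)
    (hk : 1 ≤ k) (hkl : k+2 ≤ l) :
    ((p*q)^(3*l)+(p*q)^(2*l)+(p*q)^l+1)*(1+p^(3*k)+q^(3*k)+(p*q)^(3*k))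
      < ((p*q)^(3*k)+(p*q)^(2*k)+(p*q)^k+1)*(1+p^(3*l)+q^(3*l)+(p*q)^(3*l)) := by
  obtain ⟨m, hm⟩ : ∃ m, k = m+1 := ⟨k-1, by omega⟩
  have hq2 : 2 ≤ q := by omega
  have hK1 : p^3+q^3+1 ≤ p^2*q^2 := cube_ineq p q hp hpq hq
  rw [show (p*q)^(3*l) = ((p*q)^l)^3 by ring, show (p*q)^(2*l) = ((p*q)^l)^2 by ring,
      show (p*q)^(3*k) = ((p*q)^k)^3 by ring, show (p*q)^(2*k) = ((p*q)^k)^2 by ring,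
      show p^(3*k) = (p^k)^3 by ring, show q^(3*k) = (q^k)^3 by ring,
      show p^(3*l) = (p^l)^3 by ring, show q^(3*l) = (q^l)^3 by ring,
      mul_pow p q l, mul_pow p q k]
  have hab : p^k < p^l := Nat.pow_lt_pow_right (by omega) (by omega)
  have hcd : q^k < q^l := Nat.pow_lt_pow_right (by omega) (by omega)
  have hacbd : p^k*q^k ≤ p^l*q^l := Nat.mul_le_mul hab.le hcd.le
  have hac1 : 1 ≤ p^k*q^k := by
    have : 0 < p^k*q^k := by positivity
    omega
  have hdb2 : q^l ≤ (p^l)^2 := by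
    calc q^l ≤ (p^2)^l := Nat.pow_le_pow_left hq.le l
      _ = (p^l)^2 := by ring
  have hbd2 : p^l ≤ (q^l)^2 := by
    calc p^l ≤ (q^2)^l := Nat.pow_le_pow_left (by nlinarith) l
      _ = (q^l)^2 := by ring
  have hsum : (p^k)^3+(q^k)^3+1 ≤ (p^k*q^k)^2 := by
    calc (p^k)^3+(q^k)^3+1 = (p^3)^k+(q^3)^k+1^k := by rw [one_pow]; ring_nf
      _ ≤ (p^3+q^3+1)^k := pow_sum_le3 _ _ _ k hk
      _ ≤ (p^2*q^2)^k := Nat.pow_le_pow_left hK1 k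
      _ = (p^k*q^k)^2 := by ring
  have hppos : 0 < p^2*q^2 := by positivity
  obtain ⟨w, hw⟩ : ∃ w, p^2*q^2 = w+1 := ⟨p^2*q^2-1, by omega⟩
  have hpq3w : p^3+q^3 ≤ w := by omega
  have hac3 : (p^k)^3+(q^k)^3 ≤ w^k := by
    calc (p^k)^3+(q^k)^3 = (p^3)^k+(q^3)^k := by ring
      _ ≤ (p^3+q^3)^k := pow_sum_le2 _ _ k hk
      _ ≤ w^k := Nat.pow_le_pow_left hpq3w k
  have hwk : w^k + (w+1)^m ≤ (w+1)^k := by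
    calc w^k + (w+1)^m = w^m*w + (w+1)^m := by rw [hm]; ring
      _ ≤ (w+1)^m*w + (w+1)^m := by
          have : w^m ≤ (w+1)^m := Nat.pow_le_pow_left (by omega) m
          exact Nat.add_le_add_right (Nat.mul_le_mul_right _ this) _
      _ = (w+1)^(m+1) := by ring
      _ = (w+1)^k := by rw [hm]
  have hwpq : w+1 = (p*q)^2 := by rw [← hw]; ring
  have hkey : (p^k)^3+(q^k)^3 + (w+1)^m ≤ (p^k*q^k)^2 := by
    calc (p^k)^3+(q^k)^3 + (w+1)^m ≤ w^k + (w+1)^m := Nat.add_le_add_right hac3 _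
      _ ≤ (w+1)^k := hwk
      _ = ((p*q)^2)^k := by rw [hwpq]
      _ = (p^k*q^k)^2 := by rw [← mul_pow]; ring
  have hBB : (p^l*q^l)^2*(p^k*q^k)^3 ≤ (p^l*q^l)^3*(w+1)^m := by
    calc (p^l*q^l)^2*(p^k*q^k)^3 = (p*q)^(2*l+3*k) := by rw [← mul_pow, ← mul_pow]; ring
      _ ≤ (p*q)^(3*l+2*m) := Nat.pow_le_pow_right (by positivity) (by omega)
      _ = (p^l*q^l)^3*(w+1)^m := by rw [hwpq, ← mul_pow]; ring
  have H1 : (p^l*q^l)^3*((p^k)^3+(q^k)^3) + (p^l*q^l)^2*(p^k*q^k)^3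
      ≤ (p^l*q^l)^3*(p^k*q^k)^2 := by
    calc (p^l*q^l)^3*((p^k)^3+(q^k)^3) + (p^l*q^l)^2*(p^k*q^k)^3
        ≤ (p^l*q^l)^3*((p^k)^3+(q^k)^3) + (p^l*q^l)^3*(w+1)^m := Nat.add_le_add_left hBB _
      _ = (p^l*q^l)^3*((p^k)^3+(q^k)^3 + (w+1)^m) := by ring
      _ ≤ (p^l*q^l)^3*(p^k*q^k)^2 := Nat.mul_le_mul_left _ hkey
  have H2 : (p^l*q^l)^2*((p^k)^3+(q^k)^3+1) ≤ (p^k*q^k)*(p^l*q^l)^3 := by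
    calc (p^l*q^l)^2*((p^k)^3+(q^k)^3+1) ≤ (p^l*q^l)^2*((p^k*q^k)^2) :=
          Nat.mul_le_mul_left _ hsum
      _ = (p^l*q^l)^2*((p^k*q^k)*(p^k*q^k)) := by ring
      _ ≤ (p^l*q^l)^2*((p^k*q^k)*(p^l*q^l)) :=
          Nat.mul_le_mul_left _ (Nat.mul_le_mul_left _ hacbd)
      _ = (p^k*q^k)*(p^l*q^l)^3 := by ring
  have H3 : (p^l*q^l)*(p^k*q^k)^3 ≤ (p^k*q^k)^3*(q^l)^3 := by
    have hbd3 : p^l*q^l ≤ (q^l)^3 := by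
      calc p^l*q^l ≤ (q^l)^2*q^l := Nat.mul_le_mul_right _ hbd2
        _ = (q^l)^3 := by ring
    calc (p^l*q^l)*(p^k*q^k)^3 = (p^k*q^k)^3*(p^l*q^l) := by ring
      _ ≤ (p^k*q^k)^3*(q^l)^3 := Nat.mul_le_mul_left _ hbd3
  have H4 : (p^l*q^l)*((p^k)^3+(q^k)^3+1) ≤ (p^k*q^k)^3*(p^l)^3 := by
    calc (p^l*q^l)*((p^k)^3+(q^k)^3+1) ≤ (p^l*q^l)*(p^k*q^k)^2 := Nat.mul_le_mul_left _ hsum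
      _ ≤ (p^l*(p^l)^2)*(p^k*q^k)^2 := Nat.mul_le_mul_right _ (Nat.mul_le_mul_left _ hdb2)
      _ = (p^l)^3*(p^k*q^k)^2 := by ring
      _ ≤ (p^l)^3*(p^k*q^k)^3 := Nat.mul_le_mul_left _ (Nat.pow_le_pow_right hac1 (by omega))
      _ = (p^k*q^k)^3*(p^l)^3 := by ring
  have H5 : (p^k)^3+(q^k)^3 < (p^l)^3+(q^l)^3 :=
    Nat.add_lt_add (Nat.pow_lt_pow_left hab (by omega)) (Nat.pow_lt_pow_left hcd (by omega))
  exact quadC (p^k) (p^l) (q^k) (q^l) H1 H2 H3 H4 H5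

/-! ### sigma computations -/

lemma sigmaZ_eq_sigma (s n : ℕ) : sigmaZ s n = ((ArithmeticFunction.sigma s n : ℕ) : ℤ) := by
  simp only [sigmaZ, ArithmeticFunction.sigma_apply]
  push_cast
  rfl

lemma sigmaN_prime (s : ℕ) {p : ℕ} (hp : p.Prime) : ArithmeticFunction.sigma s p = 1 + p^s := by
  rw [ArithmeticFunction.sigma_apply, hp.divisors,
    Finset.sum_pair (a := 1) (b := p) hp.one_lt.ne, one_pow]

lemma sigmaZ_prime (s : ℕ) {p : ℕ} (hp : p.Prime) : sigmaZ s p = ((1 + p^s : ℕ) : ℤ) := by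
  rw [sigmaZ_eq_sigma, sigmaN_prime s hp]

lemma sigmaZ_sq (s : ℕ) {p : ℕ} (hp : p.Prime) :
    sigmaZ s (p^2) = ((1 + p^s + (p^2)^s : ℕ) : ℤ) := by
  have h2 := hp.two_le
  have hne1 : p^2 ≠ p := by nlinarith
  have hne2 : p^2 ≠ 1 := by nlinarith
  have hne3 : p ≠ 1 := by omega
  rw [sigmaZ_eq_sigma, ArithmeticFunction.sigma_apply, hp.divisors_sq]
  rw [Finset.sum_insert (by simp [hne1, hne2, hne3]),
    Finset.sum_pair (a := p) (b := 1) hne3, one_pow]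
  push_cast
  ring

lemma sigmaZ_mul (s : ℕ) {p q : ℕ} (hp : p.Prime) (hq : q.Prime) (hne : p ≠ q) :
    sigmaZ s (p*q) = ((1 + p^s + q^s + (p*q)^s : ℕ) : ℤ) := by
  have hcop : Nat.Coprime p q := (Nat.coprime_primes hp hq).mpr hne
  have hmul : ArithmeticFunction.sigma s (p*q)
      = ArithmeticFunction.sigma s p * ArithmeticFunction.sigma s q :=
    ArithmeticFunction.isMultiplicative_sigma.map_mul_of_coprime hcop
  rw [sigmaZ_eq_sigma, hmul, sigmaN_prime s hp, sigmaN_prime s hq]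
  have : (1 + p^s) * (1 + q^s) = 1 + p^s + q^s + (p*q)^s := by
    rw [mul_pow]; ring
  rw [this]

end AFunNeg

open AFunNeg in
theorem aFun_neg (k l n : ℕ) (hk : Odd k) (hl : Odd l) (hkpos : 0 < k)
    (hkl : k < l) (hn : 2 ≤ n)
    (hp : ∀ p : ℕ, p.Prime → p ∣ n → n < p ^ 3) :
    aFun k l n < 0 := by
  have hkl2 : k + 2 ≤ l := by
    obtain ⟨i, hi⟩ := hk; obtain ⟨j, hj⟩ := hl; omega
  have hn0 : n ≠ 0 := by omega
  have hprod := Nat.prod_primeFactorsList hn0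
  have hsorted := n.primeFactorsList_sorted
  rcases hL : n.primeFactorsList with _ | ⟨a, t⟩
  · rw [hL] at hprod; simp at hprod; omega
  rcases t with _ | ⟨b, t2⟩
  · -- n = a, prime
    rw [hL] at hprod; simp at hprod
    have ha : a.Prime := Nat.prime_of_mem_primeFactorsList (by rw [hL]; simp)
    subst hprod
    have key := caseA_ineq a k l ha.two_le hkpos (by omega)
    rw [aFun, sub_neg, sigmaZ_prime (3*k) ha, sigmaZ_prime (3*l) ha]
    exact_mod_cast key
  rcases t2 with _ | ⟨c, t3⟩
  · -- n = a * b
    rw [hL] at hprod; simp at hprod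
    have ha : a.Prime := Nat.prime_of_mem_primeFactorsList (by rw [hL]; simp)
    have hb : b.Prime := Nat.prime_of_mem_primeFactorsList (by rw [hL]; simp)
    rw [hL] at hsorted
    have hab : a ≤ b := (List.pairwise_cons.mp hsorted.pairwise).1 b (by simp)
    rcases eq_or_lt_of_le hab with heq | hlt
    · -- n = a^2
      have hn2 : n = a^2 := by rw [← hprod, ← heq]; ring
      subst hn2
      have key := caseB_ineq a k l ha.two_le hkpos (by omega)
      rw [aFun, sub_neg, sigmaZ_sq (3*k) ha, sigmaZ_sq (3*l) ha]
      exact_mod_cast key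
    · -- n = a*b, a < b, and b < a² from hp
      have hdvd : a ∣ n := ⟨b, hprod.symm⟩
      have hb2 : b < a^2 := by
        have h3 := hp a ha hdvd
        rw [← hprod] at h3
        have : a*b < a*a^2 := by
          calc a*b < a^3 := h3
            _ = a*a^2 := by ring
        exact Nat.lt_of_mul_lt_mul_left this
      have hn2 : n = a*b := hprod.symm
      subst hn2
      have key := caseC_ineq a b k l ha.two_le hlt hb2 hkpos hkl2
      rw [aFun, sub_neg, sigmaZ_mul (3*k) ha hb (by omega), sigmaZ_mul (3*l) ha hb (by omega)]
      exact_mod_cast key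
  · -- at least three prime factors : contradiction
    exfalso
    rw [hL] at hprod hsorted
    simp only [List.prod_cons] at hprod
    have ha : a.Prime := Nat.prime_of_mem_primeFactorsList (by rw [hL]; simp)
    have hdvd : a ∣ n := Nat.dvd_of_mem_primeFactorsList (by rw [hL]; simp)
    have h3 := hp a ha hdvd
    have hb : a ≤ b := (List.pairwise_cons.mp hsorted.pairwise).1 b (by simp)
    have hc : a ≤ c := (List.pairwise_cons.mp hsorted.pairwise).1 c (by simp)
    have htpos : 0 < t3.prod := by
      apply List.prod_pos
      intro x hx
      exact Nat.pos_of_mem_primeFactorsList (by rw [hL]; simp [hx])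
    have habc : a^3 ≤ n := by
      calc a^3 = a*(a*(a*1)) := by ring
        _ ≤ a*(b*(c*t3.prod)) := by
            apply Nat.mul_le_mul_left
            apply Nat.mul_le_mul hb
            exact Nat.mul_le_mul hc htpos
        _ = n := hprod
    omega
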